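/- Let F be a set of functions from a set S to ℝ, φ : ℝ → ℝ an L-Lipschitz function, and fix points s₁,…,sₙ ∈ S. Then the empirical Rademacher complexity of φ ∘ F = {φ∘f : f ∈ F} satisfies R̂ₙ(φ∘F) ≤ L · R̂ₙ(F), where R̂ₙ(F) = E_ε[sup_{f∈F} (1/n)Σᵢ εᵢ f(sᵢ)] with i.i.d. Rademacher εᵢ, assuming φ(0) = 0. -/

import Mathlib

open Finset

section RCaux

variable {S : Type*}

/-- sign of a Rademacher assignment -/
def rcEps {n : ℕ} (σ : Fin n → Bool) (i : Fin n) : ℝ := if σ i then 1 else -1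

/-- partially contracted value -/
def rcVal {n : ℕ} (s : Fin n → S) (φ : ℝ → ℝ) (L : NNReal)
    (T : Finset (Fin n)) (f : S → ℝ) (σ : Fin n → Bool) : ℝ :=
  ∑ i : Fin n, rcEps σ i * (if i ∈ T then (L : ℝ) * f (s i) else φ (f (s i)))

lemma rcEps_abs {n : ℕ} (σ : Fin n → Bool) (i : Fin n) : |rcEps σ i| = 1 := by
  unfold rcEps; split <;> norm_num

lemma rcBdd {n : ℕ} (s : Fin n → S) (φ : ℝ → ℝ) (L : NNReal)
    (hφ : LipschitzWith L φ) (hφ0 : φ 0 = 0)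
    (F : Set (S → ℝ)) (B : ℝ) (hB : ∀ f ∈ F, ∀ x : S, |f x| ≤ B)
    (T : Finset (Fin n)) (σ : Fin n → Bool) :
    BddAbove (Set.range fun f : F => rcVal s φ L T f.1 σ) := by
  refine ⟨(n : ℝ) * ((L : ℝ) * B), ?_⟩
  rintro _ ⟨f, rfl⟩
  have hterm : ∀ i : Fin n,
      rcEps σ i * (if i ∈ T then (L : ℝ) * f.1 (s i) else φ (f.1 (s i))) ≤ (L : ℝ) * B := by
    intro i
    have hf : |f.1 (s i)| ≤ B := hB f.1 f.2 (s i)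
    have hLB : |(if i ∈ T then (L : ℝ) * f.1 (s i) else φ (f.1 (s i)))| ≤ (L : ℝ) * B := by
      split
      · rw [abs_mul, abs_of_nonneg (by positivity : (0:ℝ) ≤ (L:ℝ))]
        exact mul_le_mul_of_nonneg_left hf (by positivity)
      · have := hφ.dist_le_mul (f.1 (s i)) 0
        rw [Real.dist_eq, Real.dist_eq, hφ0, sub_zero, sub_zero] at this
        exact this.trans (mul_le_mul_of_nonneg_left hf (by positivity))
    calc rcEps σ i * _ ≤ |rcEps σ i * _| := le_abs_self _
      _ = |(if i ∈ T then (L : ℝ) * f.1 (s i) else φ (f.1 (s i)))| := by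
          rw [abs_mul, rcEps_abs, one_mul]
      _ ≤ (L : ℝ) * B := hLB
  calc rcVal s φ L T f.1 σ ≤ ∑ _i : Fin n, (L : ℝ) * B := Finset.sum_le_sum fun i _ => hterm i
    _ = (n : ℝ) * ((L : ℝ) * B) := by simp [mul_comm]

/-- the core one-coordinate contraction inequality -/
lemma rcCore {ι : Type*} [Nonempty ι] (φ : ℝ → ℝ) (L : NNReal) (hφ : LipschitzWith L φ)
    (a u : ι → ℝ) (c : ℝ) (hc : c = 1 ∨ c = -1)
    (h1 : BddAbove (Set.range fun f => a f + c * φ (u f)))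
    (h2 : BddAbove (Set.range fun f => a f + -c * φ (u f)))
    (h3 : BddAbove (Set.range fun f => a f + c * ((L : ℝ) * u f)))
    (h4 : BddAbove (Set.range fun f => a f + -c * ((L : ℝ) * u f))) :
    (⨆ f, a f + c * φ (u f)) + (⨆ f, a f + -c * φ (u f))
      ≤ (⨆ f, a f + c * ((L : ℝ) * u f)) + (⨆ f, a f + -c * ((L : ℝ) * u f)) := by
  set S3 := ⨆ f, a f + c * ((L : ℝ) * u f) with hS3
  set S4 := ⨆ f, a f + -c * ((L : ℝ) * u f) with hS4
  have habs : |c| = 1 := by rcases hc with rfl | rfl <;> norm_num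
  have key : ∀ f g, (a f + c * φ (u f)) + (a g + -c * φ (u g)) ≤ S3 + S4 := by
    intro f g
    have hL : |φ (u f) - φ (u g)| ≤ (L : ℝ) * |u f - u g| := by
      have := hφ.dist_le_mul (u f) (u g)
      simpa [Real.dist_eq] using this
    have h5 : c * (φ (u f) - φ (u g)) ≤ |φ (u f) - φ (u g)| := by
      calc c * (φ (u f) - φ (u g)) ≤ |c * (φ (u f) - φ (u g))| := le_abs_self _
        _ = |φ (u f) - φ (u g)| := by rw [abs_mul, habs, one_mul]
    rcases le_total 0 (c * (u f - u g)) with h | h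
    · have habsu : |u f - u g| = c * (u f - u g) := by
        rw [← abs_of_nonneg h, abs_mul, habs, one_mul]
      have h6 : (L : ℝ) * |u f - u g| = (L : ℝ) * (c * (u f - u g)) := by rw [habsu]
      have e1 : a f + c * ((L : ℝ) * u f) ≤ S3 := le_ciSup h3 f
      have e2 : a g + -c * ((L : ℝ) * u g) ≤ S4 := le_ciSup h4 g
      nlinarith [hL, h5, h6, e1, e2]
    · have habsu : |u f - u g| = -(c * (u f - u g)) := by
        rw [← abs_of_nonpos h, abs_mul, habs, one_mul]
      have h6 : (L : ℝ) * |u f - u g| = (L : ℝ) * (-(c * (u f - u g))) := by rw [habsu]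
      have e1 : a g + c * ((L : ℝ) * u g) ≤ S3 := le_ciSup h3 g
      have e2 : a f + -c * ((L : ℝ) * u f) ≤ S4 := le_ciSup h4 f
      nlinarith [hL, h5, h6, e1, e2]
  have step1 : (⨆ f, a f + c * φ (u f)) ≤ (S3 + S4) - ⨆ f, a f + -c * φ (u f) := by
    refine ciSup_le fun f => ?_
    have : (⨆ g, a g + -c * φ (u g)) ≤ (S3 + S4) - (a f + c * φ (u f)) :=
      ciSup_le fun g => by linarith [key f g]
    linarith
  linarith

end RCaux

lemma rcStep {S : Type*} (F : Set (S → ℝ)) (hF : F.Nonempty)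
    {n : ℕ} (s : Fin n → S) (φ : ℝ → ℝ) (L : NNReal)
    (hφ : LipschitzWith L φ) (hφ0 : φ 0 = 0)
    (B : ℝ) (hB : ∀ f ∈ F, ∀ x : S, |f x| ≤ B)
    (T : Finset (Fin n)) (j : Fin n) (hj : j ∉ T) :
    ∑ σ : Fin n → Bool, (⨆ f : F, rcVal s φ L T f.1 σ)
      ≤ ∑ σ : Fin n → Bool, ⨆ f : F, rcVal s φ L (insert j T) f.1 σ := by
  haveI : Nonempty F := hF.to_subtype
  have hinv : Function.Involutive (fun σ : Fin n → Bool => Function.update σ j (!σ j)) := by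
    intro σ
    funext i
    by_cases h : i = j
    · subst h; simp
    · simp [Function.update_of_ne h]
  set e : Equiv.Perm (Fin n → Bool) := hinv.toPerm _ with he
  set T' := insert j T with hT'
  have pointwise : ∀ σ : Fin n → Bool,
      (⨆ f : F, rcVal s φ L T f.1 σ) + (⨆ f : F, rcVal s φ L T f.1 (e σ))
        ≤ (⨆ f : F, rcVal s φ L T' f.1 σ) + (⨆ f : F, rcVal s φ L T' f.1 (e σ)) := by
    intro σ
    set c : ℝ := rcEps σ j with hc
    have hcval : c = 1 ∨ c = -1 := by
      rw [hc]; unfold rcEps; split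
      · exact Or.inl rfl
      · exact Or.inr rfl
    set a : F → ℝ := fun f => ∑ i ∈ univ.erase j,
        rcEps σ i * (if i ∈ T then (L : ℝ) * f.1 (s i) else φ (f.1 (s i))) with ha
    set u : F → ℝ := fun f => f.1 (s j) with hu
    have heps : ∀ i : Fin n, i ≠ j → rcEps (e σ) i = rcEps σ i := by
      intro i hij
      show rcEps (Function.update σ j (!σ j)) i = rcEps σ i
      unfold rcEps
      rw [Function.update_of_ne hij]
    have hepsj : rcEps (e σ) j = -c := by
      show rcEps (Function.update σ j (!σ j)) j = -c
      rw [hc]; unfold rcEps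
      rw [Function.update_self]
      cases hσ : σ j <;> simp
    have h1 : ∀ f : F, rcVal s φ L T f.1 σ = a f + c * φ (u f) := by
      intro f
      rw [rcVal, ← Finset.sum_erase_add _ _ (Finset.mem_univ j), ha, hc]
      simp [hj, hu]
    have h2 : ∀ f : F, rcVal s φ L T f.1 (e σ) = a f + -c * φ (u f) := by
      intro f
      rw [rcVal, ← Finset.sum_erase_add _ _ (Finset.mem_univ j)]
      congr 1
      · rw [ha]
        exact Finset.sum_congr rfl fun i hi => by
          rw [heps i (Finset.ne_of_mem_erase hi)]
      · rw [hepsj]; simp [hj, hu]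
    have haT' : ∀ f : F, (∑ i ∈ univ.erase j,
        rcEps σ i * (if i ∈ T' then (L : ℝ) * f.1 (s i) else φ (f.1 (s i)))) = a f := by
      intro f
      rw [ha]
      refine Finset.sum_congr rfl fun i hi => ?_
      have hij : i ≠ j := Finset.ne_of_mem_erase hi
      rw [hT']
      simp [Finset.mem_insert, hij]
    have h3 : ∀ f : F, rcVal s φ L T' f.1 σ = a f + c * ((L : ℝ) * u f) := by
      intro f
      rw [rcVal, ← Finset.sum_erase_add _ _ (Finset.mem_univ j), haT', hc]
      simp [hT', hu]
    have h4 : ∀ f : F, rcVal s φ L T' f.1 (e σ) = a f + -c * ((L : ℝ) * u f) := by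
      intro f
      rw [rcVal, ← Finset.sum_erase_add _ _ (Finset.mem_univ j)]
      congr 1
      · rw [← haT' f]
        exact Finset.sum_congr rfl fun i hi => by
          rw [heps i (Finset.ne_of_mem_erase hi)]
      · rw [hepsj]; simp [hT', hu]
    calc (⨆ f : F, rcVal s φ L T f.1 σ) + (⨆ f : F, rcVal s φ L T f.1 (e σ))
        = (⨆ f : F, a f + c * φ (u f)) + (⨆ f : F, a f + -c * φ (u f)) := by
          rw [iSup_congr h1, iSup_congr h2]
      _ ≤ (⨆ f : F, a f + c * ((L : ℝ) * u f)) + (⨆ f : F, a f + -c * ((L : ℝ) * u f)) := by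
          refine rcCore φ L hφ a u c hcval ?_ ?_ ?_ ?_
          · have : (fun f : F => a f + c * φ (u f)) = fun f : F => rcVal s φ L T f.1 σ :=
              funext fun f => (h1 f).symm
            rw [this]; exact rcBdd s φ L hφ hφ0 F B hB T σ
          · have : (fun f : F => a f + -c * φ (u f)) = fun f : F => rcVal s φ L T f.1 (e σ) :=
              funext fun f => (h2 f).symm
            rw [this]; exact rcBdd s φ L hφ hφ0 F B hB T (e σ)
          · have : (fun f : F => a f + c * ((L : ℝ) * u f)) = fun f : F => rcVal s φ L T' f.1 σ :=
              funext fun f => (h3 f).symm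
            rw [this]; exact rcBdd s φ L hφ hφ0 F B hB T' σ
          · have : (fun f : F => a f + -c * ((L : ℝ) * u f)) = fun f : F => rcVal s φ L T' f.1 (e σ) :=
              funext fun f => (h4 f).symm
            rw [this]; exact rcBdd s φ L hφ hφ0 F B hB T' (e σ)
      _ = (⨆ f : F, rcVal s φ L T' f.1 σ) + (⨆ f : F, rcVal s φ L T' f.1 (e σ)) := by
          rw [iSup_congr h3, iSup_congr h4]
  have hsum1 : ∑ σ : Fin n → Bool, (⨆ f : F, rcVal s φ L T f.1 (e σ))
      = ∑ σ : Fin n → Bool, ⨆ f : F, rcVal s φ L T f.1 σ :=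
    Equiv.sum_comp e (fun σ => ⨆ f : F, rcVal s φ L T f.1 σ)
  have hsum2 : ∑ σ : Fin n → Bool, (⨆ f : F, rcVal s φ L T' f.1 (e σ))
      = ∑ σ : Fin n → Bool, ⨆ f : F, rcVal s φ L T' f.1 σ :=
    Equiv.sum_comp e (fun σ => ⨆ f : F, rcVal s φ L T' f.1 σ)
  have : ∑ σ : Fin n → Bool,
      ((⨆ f : F, rcVal s φ L T f.1 σ) + ⨆ f : F, rcVal s φ L T f.1 (e σ))
      ≤ ∑ σ : Fin n → Bool,
      ((⨆ f : F, rcVal s φ L T' f.1 σ) + ⨆ f : F, rcVal s φ L T' f.1 (e σ)) :=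
    Finset.sum_le_sum fun σ _ => pointwise σ
  rw [Finset.sum_add_distrib, Finset.sum_add_distrib, hsum1, hsum2] at this
  linarith

/-- Talagrand's contraction lemma: composing a uniformly bounded function class
with an `L`-Lipschitz function `φ` with `φ 0 = 0` multiplies the empirical
Rademacher complexity by at most `L`. -/
theorem rademacher_contraction {S : Type*} (F : Set (S → ℝ)) (hF : F.Nonempty)
    (n : ℕ) (hn : 0 < n) (s : Fin n → S)
    (φ : ℝ → ℝ) (L : NNReal) (hφ : LipschitzWith L φ) (hφ0 : φ 0 = 0)
    (B : ℝ) (hB : ∀ f ∈ F, ∀ x : S, |f x| ≤ B) :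
    (1 / 2 ^ n : ℝ) * ∑ σ : Fin n → Bool,
        (⨆ f : F, (1 / (n : ℝ)) *
          ∑ i : Fin n, (if σ i then (1 : ℝ) else -1) * φ (f.1 (s i)))
      ≤ (L : ℝ) * ((1 / 2 ^ n : ℝ) * ∑ σ : Fin n → Bool,
          ⨆ f : F, (1 / (n : ℝ)) *
            ∑ i : Fin n, (if σ i then (1 : ℝ) else -1) * f.1 (s i)) := by
  haveI : Nonempty F := hF.to_subtype
  -- main induction
  have main : ∀ T : Finset (Fin n),
      ∑ σ : Fin n → Bool, (⨆ f : F, rcVal s φ L (∅ : Finset (Fin n)) f.1 σ)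
        ≤ ∑ σ : Fin n → Bool, ⨆ f : F, rcVal s φ L T f.1 σ := by
    intro T
    induction T using Finset.induction_on with
    | empty => exact le_refl _
    | insert _ _ hj => exact le_trans (by assumption) (rcStep F hF s φ L hφ hφ0 B hB _ _ hj)
  have hmain := main Finset.univ
  have hn' : (0 : ℝ) ≤ 1 / (n : ℝ) := by positivity
  -- rewrite LHS
  have hL1 : ∀ σ : Fin n → Bool,
      (⨆ f : F, (1 / (n : ℝ)) * ∑ i : Fin n, (if σ i then (1 : ℝ) else -1) * φ (f.1 (s i)))
        = (1 / (n : ℝ)) * ⨆ f : F, rcVal s φ L (∅ : Finset (Fin n)) f.1 σ := by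
    intro σ
    rw [Real.mul_iSup_of_nonneg hn']
    refine iSup_congr fun f => ?_
    simp [rcVal, rcEps]
  have hL2 : ∀ σ : Fin n → Bool,
      (L : ℝ) * ⨆ f : F, (1 / (n : ℝ)) * ∑ i : Fin n, (if σ i then (1 : ℝ) else -1) * f.1 (s i)
        = (1 / (n : ℝ)) * ⨆ f : F, rcVal s φ L (Finset.univ : Finset (Fin n)) f.1 σ := by
    intro σ
    rw [Real.mul_iSup_of_nonneg (by positivity : (0:ℝ) ≤ (L:ℝ)), Real.mul_iSup_of_nonneg hn']
    refine iSup_congr fun f => ?_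
    have hx : rcVal s φ L (Finset.univ : Finset (Fin n)) f.1 σ
        = (L : ℝ) * ∑ i : Fin n, (if σ i then (1 : ℝ) else -1) * f.1 (s i) := by
      rw [rcVal, Finset.mul_sum]
      refine Finset.sum_congr rfl fun i _ => ?_
      simp only [Finset.mem_univ, if_true, rcEps]
      ring
    rw [hx]
    ring
  have e1 : ∑ σ : Fin n → Bool,
      (⨆ f : F, (1 / (n : ℝ)) * ∑ i : Fin n, (if σ i then (1 : ℝ) else -1) * φ (f.1 (s i)))
      = (1 / (n : ℝ)) * ∑ σ : Fin n → Bool, ⨆ f : F, rcVal s φ L (∅ : Finset (Fin n)) f.1 σ := by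
    rw [Finset.mul_sum]
    exact Finset.sum_congr rfl fun σ _ => hL1 σ
  have e2 : (L : ℝ) * ∑ σ : Fin n → Bool,
      (⨆ f : F, (1 / (n : ℝ)) * ∑ i : Fin n, (if σ i then (1 : ℝ) else -1) * f.1 (s i))
      = (1 / (n : ℝ)) * ∑ σ : Fin n → Bool,
          ⨆ f : F, rcVal s φ L (Finset.univ : Finset (Fin n)) f.1 σ := by
    rw [Finset.mul_sum, Finset.mul_sum]
    exact Finset.sum_congr rfl fun σ _ => hL2 σ
  calc (1 / 2 ^ n : ℝ) * ∑ σ : Fin n → Bool,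
        (⨆ f : F, (1 / (n : ℝ)) * ∑ i : Fin n, (if σ i then (1 : ℝ) else -1) * φ (f.1 (s i)))
      = (1 / 2 ^ n : ℝ) * ((1 / (n : ℝ)) *
          ∑ σ : Fin n → Bool, ⨆ f : F, rcVal s φ L (∅ : Finset (Fin n)) f.1 σ) := by rw [e1]
    _ ≤ (1 / 2 ^ n : ℝ) * ((1 / (n : ℝ)) *
          ∑ σ : Fin n → Bool, ⨆ f : F, rcVal s φ L (Finset.univ : Finset (Fin n)) f.1 σ) := by
        exact mul_le_mul_of_nonneg_left (mul_le_mul_of_nonneg_left hmain hn') (by positivity)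
    _ = (L : ℝ) * ((1 / 2 ^ n : ℝ) * ∑ σ : Fin n → Bool,
          ⨆ f : F, (1 / (n : ℝ)) * ∑ i : Fin n, (if σ i then (1 : ℝ) else -1) * f.1 (s i)) := by
        rw [show (L : ℝ) * ((1 / 2 ^ n : ℝ) * ∑ σ : Fin n → Bool,
            ⨆ f : F, (1 / (n : ℝ)) * ∑ i : Fin n, (if σ i then (1 : ℝ) else -1) * f.1 (s i))
          = (1 / 2 ^ n : ℝ) * ((L : ℝ) * ∑ σ : Fin n → Bool,
            ⨆ f : F, (1 / (n : ℝ)) * ∑ i : Fin n, (if σ i then (1 : ℝ) else -1) * f.1 (s i)) by ring,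
          e2]
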